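/- For integers 0 ≤ k < d-1, the alternating sum ∑_{j=k+1}^{d-1} (-1)^{j-k+1} * (d-j) * C(d,j) equals d * C(d-2,k). -/

import Mathlib

lemma aux_alt_sum (n : ℕ) : ∀ k : ℕ, k < n →
    ∑ j ∈ Finset.Icc (k + 1) n, (-1 : ℤ) ^ (j - k + 1) * (n.choose j) =
      ((n - 1).choose k : ℤ) := by
  intro k hk
  obtain ⟨m, hm⟩ : ∃ m, n - 1 - k = m := ⟨_, rfl⟩
  induction m generalizing k with
  | zero =>
    have hkn : k = n - 1 := by omega
    subst hkn
    have hIcc : Finset.Icc (n - 1 + 1) n = {n} := by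
      rw [show n - 1 + 1 = n by omega]
      simp
    rw [hIcc]
    simp [Nat.choose_self, show n - (n - 1) + 1 = 2 by omega]
  | succ m ih =>
    have hk1 : k + 1 < n := by omega
    have hsplit : Finset.Icc (k + 1) n = insert (k + 1) (Finset.Icc (k + 2) n) := by
      ext x
      simp only [Finset.mem_Icc, Finset.mem_insert]
      omega
    rw [hsplit, Finset.sum_insert (by simp)]
    have hrest : ∑ j ∈ Finset.Icc (k + 2) n, (-1 : ℤ) ^ (j - k + 1) * (n.choose j)
        = - ∑ j ∈ Finset.Icc (k + 2) n, (-1 : ℤ) ^ (j - (k+1) + 1) * (n.choose j) := by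
      rw [← Finset.sum_neg_distrib]
      apply Finset.sum_congr rfl
      intro j hj
      simp only [Finset.mem_Icc] at hj
      have : j - k + 1 = (j - (k+1) + 1) + 1 := by omega
      rw [this, pow_succ]
      ring
    rw [hrest, ih (k+1) hk1 (by omega)]
    have hpasc : (n.choose (k+1) : ℤ) = ((n-1).choose k : ℤ) + ((n-1).choose (k+1) : ℤ) := by
      have h2 : n.choose (k+1) = (n-1).choose k + (n-1).choose (k+1) := by
        conv_lhs => rw [show n = n - 1 + 1 by omega]
        rw [Nat.choose_succ_succ]
      exact_mod_cast h2
    rw [show (k + 1) - k + 1 = 2 by omega]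
    rw [hpasc]; ring

/-- For integers `0 ≤ k < d-1`, the alternating sum
`∑_{j=k+1}^{d-1} (-1)^{j-k+1} * (d-j) * C(d,j)` equals `d * C(d-2,k)`. -/
theorem stmt1 (d k : ℕ) (hk : k < d - 1) :
    ∑ j ∈ Finset.Icc (k + 1) (d - 1), (-1 : ℤ) ^ (j - k + 1) * ((d - j : ℕ) : ℤ) * (d.choose j) =
      (d : ℤ) * ((d - 2).choose k : ℤ) := by
  have hd : 2 ≤ d := by omega
  have hterm : ∀ j ∈ Finset.Icc (k + 1) (d - 1),
      (-1 : ℤ) ^ (j - k + 1) * ((d - j : ℕ) : ℤ) * (d.choose j)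
        = (d : ℤ) * ((-1 : ℤ) ^ (j - k + 1) * ((d-1).choose j : ℤ)) := by
    intro j hj
    simp only [Finset.mem_Icc] at hj
    have := Nat.choose_mul_succ_eq (d - 1) j
    rw [show d - 1 + 1 = d by omega] at this
    have : (d.choose j : ℤ) * ((d - j : ℕ) : ℤ) = ((d-1).choose j : ℤ) * d := by
      exact_mod_cast this.symm
    calc (-1 : ℤ) ^ (j - k + 1) * ((d - j : ℕ) : ℤ) * (d.choose j)
        = (-1 : ℤ) ^ (j - k + 1) * ((d.choose j : ℤ) * ((d - j : ℕ) : ℤ)) := by ring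
      _ = (-1 : ℤ) ^ (j - k + 1) * (((d-1).choose j : ℤ) * d) := by rw [this]
      _ = (d : ℤ) * ((-1 : ℤ) ^ (j - k + 1) * ((d-1).choose j : ℤ)) := by ring
  rw [Finset.sum_congr rfl hterm, ← Finset.mul_sum]
  rw [aux_alt_sum (d - 1) k hk, show d - 1 - 1 = d - 2 by omega]
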